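/- arXiv:1110.1792 — 3 statements merged into one kernel-verified Lean document; each statement's English description precedes it below -/
import Mathlib

section
/- Let Γ ≤ Sim_L(ℝ^{m+2}) act freely and properly discontinuously on ℝ^{m+2}. Suppose Γ contains a pure translation x ↦ x + v by a vector v with Q(v) ≠ 0. Then every element of Γ has similarity factor λ = 1. -/
noncomputable section

/-- `Vec n` is the euclidean space `ℝ^n`. -/
abbrev Vec (n : ℕ) : Type := Fin n → ℝ

/-- The group of invertible affine transformations of `ℝ^n`. -/
abbrev AffGroup (n : ℕ) := Vec n ≃ᵃ[ℝ] Vec n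

/-- The standard Lorentz quadratic form `Q(x) = x₁² + ⋯ + x_{m+1}² − x_{m+2}²` on `ℝ^{m+2}`. -/
def lorentzQ (m : ℕ) (x : Vec (m + 2)) : ℝ :=
  (∑ i : Fin (m + 1), x i.castSucc ^ 2) - x (Fin.last (m + 1)) ^ 2

/-- Membership in the Lorentzian similarity group
`Sim_L(ℝ^{m+2}) = ℝ^{m+2} ⋊ (O(m+1,1) × ℝ^+)`: the linear part is `λ • A` with `λ > 0`
and `A` a linear map preserving the Lorentz form. -/
def InSimL (m : ℕ) (g : AffGroup (m + 2)) : Prop :=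
  ∃ (lam : ℝ) (A : Vec (m + 2) →ₗ[ℝ] Vec (m + 2)), 0 < lam ∧
    (∀ v, lorentzQ m (A v) = lorentzQ m v) ∧ ∀ v, g.linear v = lam • A v

/-- Properly discontinuous action on `ℝ^n`. -/
def ProperlyDisc {n : ℕ} (Γ : Subgroup (AffGroup n)) : Prop :=
  ∀ K : Set (Vec n), IsCompact K →
    {γ : AffGroup n | γ ∈ Γ ∧ (⇑γ '' K ∩ K).Nonempty}.Finite

/-- Free action on `ℝ^n`. -/
def FreeAction {n : ℕ} (Γ : Subgroup (AffGroup n)) : Prop :=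
  ∀ γ ∈ Γ, (∃ x : Vec n, γ x = x) → γ = 1

/-- Cocompact action on `ℝ^n`: some compact set meets every orbit. -/
def CocompactAction {n : ℕ} (Γ : Subgroup (AffGroup n)) : Prop :=
  ∃ K : Set (Vec n), IsCompact K ∧ ∀ x : Vec n, ∃ γ ∈ Γ, γ x ∈ K

namespace S5
open Matrix

def bform (m : ℕ) (x y : Vec (m + 2)) : ℝ :=
  (∑ i : Fin (m + 1), x i.castSucc * y i.castSucc)
    - x (Fin.last (m + 1)) * y (Fin.last (m + 1))

variable {m : ℕ}

lemma bform_self (x : Vec (m + 2)) : bform m x x = lorentzQ m x := by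
  simp [bform, lorentzQ, sq]

lemma bform_comm (x y : Vec (m + 2)) : bform m x y = bform m y x := by
  simp only [bform]
  congr 1
  · exact Finset.sum_congr rfl fun i _ => mul_comm _ _
  · exact mul_comm _ _

lemma Q_add (x y : Vec (m + 2)) :
    lorentzQ m (x + y) = lorentzQ m x + 2 * bform m x y + lorentzQ m y := by
  simp only [lorentzQ, bform, Pi.add_apply]
  rw [Finset.sum_congr rfl (fun i _ => show (x i.castSucc + y i.castSucc) ^ 2
    = x i.castSucc ^ 2 + 2 * (x i.castSucc * y i.castSucc) + y i.castSucc ^ 2 by ring)]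
  rw [Finset.sum_add_distrib, Finset.sum_add_distrib, ← Finset.mul_sum]
  ring

lemma Q_smul (c : ℝ) (x : Vec (m + 2)) : lorentzQ m (c • x) = c ^ 2 * lorentzQ m x := by
  simp only [lorentzQ, Pi.smul_apply, smul_eq_mul, mul_pow]
  rw [← Finset.mul_sum]
  ring

lemma bform_add_right (x y z : Vec (m + 2)) :
    bform m x (y + z) = bform m x y + bform m x z := by
  simp only [bform, Pi.add_apply, mul_add]
  rw [Finset.sum_add_distrib]; ring

lemma bform_smul_right (c : ℝ) (x y : Vec (m + 2)) :
    bform m x (c • y) = c * bform m x y := by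
  simp only [bform, Pi.smul_apply, smul_eq_mul, mul_sub, Finset.mul_sum]
  congr 1
  · exact Finset.sum_congr rfl fun i _ => by ring
  · ring

lemma bform_smul_left (c : ℝ) (x y : Vec (m + 2)) :
    bform m (c • x) y = c * bform m x y := by
  rw [bform_comm, bform_smul_right, bform_comm]

lemma bform_sub_right (x y z : Vec (m + 2)) :
    bform m x (y - z) = bform m x y - bform m x z := by
  have h := bform_add_right x (y - z) z
  simp only [sub_add_cancel] at h
  linarith

/-- If the last coordinate of `z` vanishes and `Q z = 0` then `z = 0`. -/
lemma eq_zero_of_last_eq_zero (z : Vec (m + 2)) (hl : z (Fin.last (m + 1)) = 0)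
    (hq : lorentzQ m z = 0) : z = 0 := by
  have hsum : ∑ i : Fin (m + 1), z i.castSucc ^ 2 = 0 := by
    simp only [lorentzQ, hl] at hq; nlinarith [hq]
  have hz := (Finset.sum_eq_zero_iff_of_nonneg (fun i _ => sq_nonneg _)).1 hsum
  funext i
  refine Fin.lastCases ?_ (fun j => ?_) i
  · exact hl
  · exact pow_eq_zero_iff two_ne_zero |>.1 (hz j (Finset.mem_univ j))

lemma lightlike_last_ne_zero (u : Vec (m + 2)) (hu : lorentzQ m u = 0) (hne : u ≠ 0) :
    u (Fin.last (m + 1)) ≠ 0 := fun h0 => hne (eq_zero_of_last_eq_zero u h0 hu)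

/-- Two orthogonal lightlike vectors are proportional. -/
lemma isotropic_dep (u x : Vec (m + 2)) (hu : lorentzQ m u = 0) (hx : lorentzQ m x = 0)
    (hB : bform m u x = 0) (hne : u ≠ 0) : ∃ c : ℝ, x = c • u := by
  have hs : u (Fin.last (m + 1)) ≠ 0 := lightlike_last_ne_zero u hu hne
  set s := u (Fin.last (m + 1)) with hsdef
  set t := x (Fin.last (m + 1)) with htdef
  have hz : s • x - t • u = 0 := by
    apply eq_zero_of_last_eq_zero
    · simp only [Pi.sub_apply, Pi.smul_apply, smul_eq_mul, ← hsdef, ← htdef]; ring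
    · have : lorentzQ m (s • x + (-t) • u)
          = s ^ 2 * lorentzQ m x + 2 * (s * (-t * bform m x u)) + (-t) ^ 2 * lorentzQ m u := by
        rw [Q_add, Q_smul, Q_smul, bform_smul_left, bform_smul_right]
      rw [bform_comm u x] at hB
      rw [show s • x - t • u = s • x + (-t) • u by module, this, hu, hx, hB]; ring
  refine ⟨t / s, ?_⟩
  have : s • x = t • u := by rwa [sub_eq_zero] at hz
  funext i
  have := congrFun this i
  simp only [Pi.smul_apply, smul_eq_mul] at this ⊢
  field_simp
  linarith [this]

/-- `Q` is positive semidefinite on the orthogonal complement of a nonzero lightlike vector. -/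
lemma psd_on_perp (u x : Vec (m + 2)) (hu : lorentzQ m u = 0) (hne : u ≠ 0)
    (hB : bform m u x = 0) : 0 ≤ lorentzQ m x := by
  have hs : u (Fin.last (m + 1)) ≠ 0 := lightlike_last_ne_zero u hu hne
  set s := u (Fin.last (m + 1))
  set t := x (Fin.last (m + 1))
  have hsum_u : ∑ i : Fin (m + 1), u i.castSucc ^ 2 = s ^ 2 := by
    simp only [lorentzQ] at hu; linarith
  have hdot : ∑ i : Fin (m + 1), u i.castSucc * x i.castSucc = s * t := by
    simp only [bform] at hB; linarith
  have hCS := Finset.sum_mul_sq_le_sq_mul_sq Finset.univ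
    (fun i : Fin (m + 1) => u i.castSucc) (fun i => x i.castSucc)
  rw [hdot, hsum_u] at hCS
  have hs2 : 0 < s ^ 2 := by positivity
  have : s ^ 2 * lorentzQ m x ≥ 0 := by
    simp only [lorentzQ]; nlinarith [hCS]
  nlinarith [this, hs2]


lemma continuous_Q : Continuous (lorentzQ m) := by
  unfold lorentzQ
  apply Continuous.sub
  · apply continuous_finset_sum
    intro i _
    exact (continuous_apply (i.castSucc : Fin (m + 2))).pow 2
  · exact (continuous_apply (Fin.last (m + 1))).pow 2

lemma continuous_bform_right (u : Vec (m + 2)) : Continuous (fun x => bform m u x) := by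
  unfold bform
  apply Continuous.sub
  · apply continuous_finset_sum
    intro i _
    exact continuous_const.mul (continuous_apply (i.castSucc : Fin (m + 2)))
  · exact continuous_const.mul (continuous_apply (Fin.last (m + 1)))

/-- Coercivity of a positive definite restriction of `Q`. -/
lemma coercive (u u' : Vec (m + 2))
    (hpos : ∀ x : Vec (m + 2), bform m u x = 0 → bform m u' x = 0 → x ≠ 0 → 0 < lorentzQ m x) :
    ∃ C : ℝ, 0 ≤ C ∧ ∀ x : Vec (m + 2), bform m u x = 0 → bform m u' x = 0 →
      ‖x‖ ^ 2 ≤ C * lorentzQ m x := by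
  classical
  set S : Set (Vec (m + 2)) := {x | (bform m u x = 0 ∧ bform m u' x = 0) ∧ ‖x‖ = 1} with hS
  have hSclosed : IsClosed S := by
    refine IsClosed.inter (IsClosed.inter ?_ ?_) ?_
    · exact isClosed_eq (continuous_bform_right u) continuous_const
    · exact isClosed_eq (continuous_bform_right u') continuous_const
    · exact isClosed_eq continuous_norm continuous_const
  have hSbdd : Bornology.IsBounded S := by
    apply Bornology.IsBounded.subset (Metric.isBounded_closedBall (x := (0 : Vec (m+2))) (r := 1))
    intro x hx
    simp only [Metric.mem_closedBall, dist_zero_right]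
    exact le_of_eq hx.2
  have hScompact : IsCompact S := Metric.isCompact_of_isClosed_isBounded hSclosed hSbdd
  by_cases hne : S.Nonempty
  · obtain ⟨x₀, hx₀S, hmin⟩ := hScompact.exists_isMinOn hne (continuous_Q.continuousOn)
    have hx₀ne : x₀ ≠ 0 := by
      intro h; rw [h] at hx₀S; simpa using hx₀S.2
    have hm0 : 0 < lorentzQ m x₀ := hpos x₀ hx₀S.1.1 hx₀S.1.2 hx₀ne
    refine ⟨(lorentzQ m x₀)⁻¹, by positivity, fun x hbu hbu' => ?_⟩
    by_cases hx : x = 0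
    · simp [hx, lorentzQ]
    · have hnx : (0:ℝ) < ‖x‖ := norm_pos_iff.2 hx
      set y := ‖x‖⁻¹ • x with hy
      have hyS : y ∈ S := by
        refine ⟨⟨?_, ?_⟩, ?_⟩
        · rw [hy, bform_smul_right, hbu, mul_zero]
        · rw [hy, bform_smul_right, hbu', mul_zero]
        · rw [hy, norm_smul]; simp [abs_of_pos (inv_pos.2 hnx), inv_mul_cancel₀ hnx.ne']
      have hQy : lorentzQ m y = ‖x‖⁻¹ ^ 2 * lorentzQ m x := Q_smul _ _
      have hle : lorentzQ m x₀ ≤ lorentzQ m y := hmin hyS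
      rw [hQy] at hle
      have hxne : ‖x‖ ≠ 0 := hnx.ne'
      have key : lorentzQ m x₀ * ‖x‖ ^ 2 ≤ lorentzQ m x := by
        have h := mul_le_mul_of_nonneg_right hle (pow_pos hnx 2).le
        calc lorentzQ m x₀ * ‖x‖ ^ 2 ≤ ‖x‖⁻¹ ^ 2 * lorentzQ m x * ‖x‖ ^ 2 := h
          _ = lorentzQ m x := by field_simp
      rw [inv_mul_eq_div, le_div_iff₀ hm0]
      linarith [key]
  · refine ⟨0, le_refl _, fun x hbu hbu' => ?_⟩
    by_cases hx : x = 0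
    · simp [hx, lorentzQ]
    · exfalso
      have hnx : (0:ℝ) < ‖x‖ := norm_pos_iff.2 hx
      apply hne
      refine ⟨‖x‖⁻¹ • x, ⟨?_, ?_⟩, ?_⟩
      · rw [bform_smul_right, hbu, mul_zero]
      · rw [bform_smul_right, hbu', mul_zero]
      · rw [norm_smul]; simp [abs_of_pos (inv_pos.2 hnx), inv_mul_cancel₀ hnx.ne']

def flipv (m : ℕ) (y : Vec (m + 2)) : Vec (m + 2) :=
  fun i => if i = Fin.last (m + 1) then -y i else y i

lemma dot_flipv (x y : Vec (m + 2)) : x ⬝ᵥ flipv m y = bform m x y := by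
  unfold dotProduct flipv bform
  rw [Fin.sum_univ_castSucc]
  have hne : ∀ i : Fin (m + 1), (i.castSucc : Fin (m + 2)) ≠ Fin.last (m + 1) :=
    fun i => (Fin.castSucc_lt_last i).ne
  simp only [hne, if_false, if_pos rfl, if_true, eq_self_iff_true]
  ring

lemma flipv_ne_zero (y : Vec (m + 2)) (hy : y ≠ 0) : flipv m y ≠ 0 := by
  intro h
  apply hy
  funext i
  have := congrFun h i
  simp only [flipv, Pi.zero_apply] at this ⊢
  by_cases hi : i = Fin.last (m + 1)
  · rw [if_pos hi] at this; linarith [this]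
  · rwa [if_neg hi] at this

/-- A linear map scaling the Lorentz form by `lam ^ 2` and fixing a nonzero vector has an
eigenvector with eigenvalue `lam ^ 2`. -/
lemma exists_eigen (lam : ℝ) (L : Vec (m + 2) →ₗ[ℝ] Vec (m + 2))
    (hBL : ∀ x y, bform m (L x) (L y) = lam ^ 2 * bform m x y)
    (u : Vec (m + 2)) (hune : u ≠ 0) (hu : L u = u) :
    ∃ u' : Vec (m + 2), u' ≠ 0 ∧ L u' = lam ^ 2 • u' := by
  classical
  set T : Matrix (Fin (m + 2)) (Fin (m + 2)) ℝ := LinearMap.toMatrix' L with hT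
  have hTapp : ∀ x, T *ᵥ x = L x := by
    intro x
    rw [hT, ← Matrix.toLin'_apply, Matrix.toLin'_toMatrix']
  have hvecMul : flipv m u ᵥ* T = lam ^ 2 • flipv m u := by
    funext i
    have h1 : (flipv m u ᵥ* T) ⬝ᵥ Pi.single i 1 = (lam ^ 2 • flipv m u) ⬝ᵥ Pi.single i 1 := by
      rw [← Matrix.dotProduct_mulVec, hTapp]
      rw [dotProduct_comm (flipv m u) (L (Pi.single i 1)), dot_flipv]
      have : bform m (L (Pi.single i 1)) u = lam ^ 2 * bform m (Pi.single i 1) u := by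
        conv_lhs => rw [← hu]
        exact hBL _ _
      rw [this, ← dot_flipv, smul_dotProduct, ← dotProduct_comm]
      congr 1
    rw [dotProduct_single, dotProduct_single, mul_one, mul_one] at h1
    exact h1
  have hw0 : (Tᵀ - lam ^ 2 • 1) *ᵥ flipv m u = 0 := by
    rw [Matrix.sub_mulVec, Matrix.mulVec_transpose, hvecMul, Matrix.smul_mulVec,
      Matrix.one_mulVec, sub_self]
  have hdet : (Tᵀ - lam ^ 2 • (1 : Matrix (Fin (m + 2)) (Fin (m + 2)) ℝ)).det = 0 :=
    Matrix.exists_mulVec_eq_zero_iff.1 ⟨flipv m u, flipv_ne_zero u hune, hw0⟩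
  have hdet' : (T - lam ^ 2 • (1 : Matrix (Fin (m + 2)) (Fin (m + 2)) ℝ)).det = 0 := by
    rw [← Matrix.det_transpose, Matrix.transpose_sub, Matrix.transpose_smul,
      Matrix.transpose_one]
    exact hdet
  obtain ⟨u', hu'ne, hu'⟩ := Matrix.exists_mulVec_eq_zero_iff.2 hdet'
  refine ⟨u', hu'ne, ?_⟩
  rw [Matrix.sub_mulVec, Matrix.smul_mulVec, Matrix.one_mulVec, sub_eq_zero, hTapp] at hu'
  exact hu'

/-- Infinitely many distinct translations with uniformly bounded vectors contradict proper
discontinuity. -/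
lemma trans_contra {n : ℕ} (Γ : Subgroup (AffGroup n))
    (hPD : ∀ K : Set (Vec n), IsCompact K →
      {γ : AffGroup n | γ ∈ Γ ∧ (⇑γ '' K ∩ K).Nonempty}.Finite)
    (δ : ℕ → AffGroup n) (w : ℕ → Vec n) (hδΓ : ∀ k, δ k ∈ Γ)
    (hδ : ∀ k x, δ k x = x + w k) (hwinj : Function.Injective w)
    (R : ℝ) (hR : ∀ k, ‖w k‖ ≤ R) : False := by
  have hfin := hPD (Metric.closedBall 0 R) (isCompact_closedBall 0 R)
  have hR0 : (0:ℝ) ≤ R := le_trans (norm_nonneg (w 0)) (hR 0)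
  have hsub : Set.range δ ⊆
      {γ : AffGroup n | γ ∈ Γ ∧ (⇑γ '' Metric.closedBall 0 R ∩ Metric.closedBall 0 R).Nonempty} := by
    rintro - ⟨k, rfl⟩
    refine ⟨hδΓ k, w k, ⟨0, ?_, ?_⟩, ?_⟩
    · simp [Metric.mem_closedBall, hR0]
    · rw [hδ k 0, zero_add]
    · simp only [Metric.mem_closedBall, dist_zero_right]
      exact hR k
  have hinj : Function.Injective δ := by
    intro a b h
    apply hwinj
    have := congrArg (fun (g : AffGroup n) => g 0) h
    simpa [hδ a 0, hδ b 0] using this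
  exact (Set.infinite_range_of_injective hinj) (hfin.subset hsub)


lemma core (m : ℕ) (Γ : Subgroup (AffGroup (m + 2)))
    (hFree : FreeAction Γ) (hPD : ProperlyDisc Γ)
    (τ : AffGroup (m + 2)) (hτ : τ ∈ Γ) (v : Vec (m + 2))
    (hτv : ∀ x : Vec (m + 2), τ x = x + v) (hQv : lorentzQ m v ≠ 0)
    (γ : AffGroup (m + 2)) (hγ : γ ∈ Γ) (lam : ℝ) (h0 : 0 < lam) (h1 : lam < 1)
    (hQL : ∀ x, lorentzQ m (γ.linear x) = lam ^ 2 * lorentzQ m x) : False := by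
  classical
  have hlam2pos : (0:ℝ) < lam ^ 2 := by positivity
  have hlam2 : lam ^ 2 < 1 := by nlinarith
  -- polarization
  have hBL : ∀ x y, bform m (γ.linear x) (γ.linear y) = lam ^ 2 * bform m x y := by
    intro x y
    have hq := Q_add (γ.linear x) (γ.linear y)
    rw [← _root_.map_add, hQL, hQL, hQL, Q_add] at hq
    linarith
  -- affine decomposition
  have haff : ∀ x, γ x = γ.linear x + γ 0 := by
    intro x
    have h := AffineMap.decomp (γ.toAffineMap : Vec (m+2) →ᵃ[ℝ] Vec (m+2))
    have h2 := congrFun h x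
    simpa using h2
  -- fixed vector of the linear part
  obtain ⟨u, hune, hu⟩ : ∃ u : Vec (m + 2), u ≠ 0 ∧ γ.linear u = u := by
    by_contra hcon
    push_neg at hcon
    set f : Vec (m + 2) →ₗ[ℝ] Vec (m + 2) :=
      LinearMap.id - (γ.linear : Vec (m + 2) →ₗ[ℝ] Vec (m + 2)) with hf
    have hinj : Function.Injective f := by
      rw [← LinearMap.ker_eq_bot, LinearMap.ker_eq_bot']
      intro x hx
      by_contra hxne
      apply hcon x hxne
      have hx' : x - γ.linear x = 0 := by simpa [hf] using hx
      exact (sub_eq_zero.1 hx').symm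
    have hsurj := LinearMap.injective_iff_surjective.mp hinj
    obtain ⟨x, hx⟩ := hsurj (γ 0)
    have hx' : x - γ.linear x = γ 0 := by simpa [hf] using hx
    have hfx : γ x = x := by rw [haff x, ← hx']; abel
    have hγ1 : γ = 1 := hFree γ hγ ⟨x, hfx⟩
    have hv := hQL v
    rw [hγ1] at hv
    simp only [AffineEquiv.one_def] at hv
    rw [show (AffineEquiv.refl ℝ (Vec (m+2))).linear v = v from rfl] at hv
    have h2 : (1 - lam ^ 2) * lorentzQ m v = 0 := by linarith
    rcases mul_eq_zero.1 h2 with h3 | h3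
    · nlinarith
    · exact hQv h3
  -- u is lightlike
  have hQu : lorentzQ m u = 0 := by
    have h := hQL u
    rw [hu] at h
    have h2 : (1 - lam ^ 2) * lorentzQ m u = 0 := by linarith
    rcases mul_eq_zero.1 h2 with h3 | h3
    · nlinarith
    · exact h3
  -- eigenvector with eigenvalue lam ^ 2
  obtain ⟨u₁, hu₁ne, hu₁⟩ := exists_eigen lam (γ.linear : Vec (m + 2) →ₗ[ℝ] Vec (m + 2))
    (by intro x y; simpa using hBL x y) u hune (by simpa using hu)
  have hLu₁ : γ.linear u₁ = lam ^ 2 • u₁ := by simpa using hu₁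
  have hQu₁ : lorentzQ m u₁ = 0 := by
    have h := hQL u₁
    rw [hLu₁, Q_smul] at h
    have h2 : lam ^ 2 * ((lam ^ 2 - 1) * lorentzQ m u₁) = 0 := by ring_nf; ring_nf at h; linarith
    have h3 := (mul_eq_zero.1 h2).resolve_left (ne_of_gt hlam2pos)
    have h4 := (mul_eq_zero.1 h3).resolve_left (by nlinarith : lam ^ 2 - 1 ≠ 0)
    exact h4
  -- u and u₁ are not orthogonal
  have hBuu₁ : bform m u u₁ ≠ 0 := by
    intro hB0
    obtain ⟨c, hc⟩ := isotropic_dep u u₁ hQu hQu₁ hB0 hune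
    have h1 : γ.linear u₁ = u₁ := by rw [hc, _root_.map_smul, hu]
    rw [hLu₁] at h1
    have h2 : (lam ^ 2 - 1) • u₁ = 0 := by rw [sub_smul, one_smul, h1, sub_self]
    have h3 : u₁ = 0 :=
      (smul_eq_zero.1 h2).resolve_left (by nlinarith : lam ^ 2 - 1 ≠ 0)
    exact hu₁ne h3
  -- normalize
  set u' : Vec (m + 2) := (bform m u u₁)⁻¹ • u₁ with hu'def
  have hBuu' : bform m u u' = 1 := by
    rw [hu'def, bform_smul_right, inv_mul_cancel₀ hBuu₁]
  have hLu' : γ.linear u' = lam ^ 2 • u' := by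
    rw [hu'def, _root_.map_smul, hLu₁, smul_comm]
  have hQu' : lorentzQ m u' = 0 := by rw [hu'def, Q_smul, hQu₁, mul_zero]
  -- invariances
  have hBuL : ∀ x, bform m u (γ.linear x) = lam ^ 2 * bform m u x := by
    intro x
    conv_lhs => rw [← hu]
    exact hBL u x
  have hBu'L : ∀ x, bform m u' (γ.linear x) = bform m u' x := by
    intro x
    have h := hBL u' x
    rw [hLu', bform_smul_left] at h
    exact mul_left_cancel₀ (ne_of_gt hlam2pos) h
  -- positive definiteness on W
  have hposW : ∀ x : Vec (m + 2), bform m u x = 0 → bform m u' x = 0 → x ≠ 0 →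
      0 < lorentzQ m x := by
    intro x hbu hbu' hxne
    have hge := psd_on_perp u x hQu hune hbu
    rcases eq_or_lt_of_le hge with heq | hlt
    · exfalso
      obtain ⟨c, hc⟩ := isotropic_dep u x hQu heq.symm hbu hune
      have h1 : bform m u' x = c * bform m u' u := by rw [hc, bform_smul_right]
      rw [hbu', bform_comm u' u, hBuu', mul_one] at h1
      exact hxne (by rw [hc, ← h1, zero_smul])
    · exact hlt
  obtain ⟨C, hC0, hCle⟩ := coercive u u' hposW
  -- decomposition of v
  set a : ℝ := bform m u' v with hadef
  set b : ℝ := bform m u v with hbdef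
  set w₀ : Vec (m + 2) := v - a • u - b • u' with hw₀def
  have hbuw₀ : bform m u w₀ = 0 := by
    rw [hw₀def, bform_sub_right, bform_sub_right, bform_smul_right, bform_smul_right,
      bform_self, hQu, hBuu']
    ring
  have hbu'w₀ : bform m u' w₀ = 0 := by
    rw [hw₀def, bform_sub_right, bform_sub_right, bform_smul_right, bform_smul_right,
      bform_comm u' u, hBuu', bform_self, hQu']
    ring
  have hQw₀ : 0 ≤ lorentzQ m w₀ := psd_on_perp u w₀ hQu hune hbuw₀
  -- iterates
  set w : ℕ → Vec (m + 2) := fun k => (⇑γ.linear)^[k] v with hwdef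
  set xw : ℕ → Vec (m + 2) := fun k => (⇑γ.linear)^[k] w₀ with hxwdef
  have hw0 : w 0 = v := rfl
  have hxw0 : xw 0 = w₀ := rfl
  have hwsucc : ∀ k, w (k + 1) = γ.linear (w k) := by
    intro k; rw [hwdef]; exact Function.iterate_succ_apply' _ _ _
  have hxwsucc : ∀ k, xw (k + 1) = γ.linear (xw k) := by
    intro k; rw [hxwdef]; exact Function.iterate_succ_apply' _ _ _
  have hQwk : ∀ k, lorentzQ m (w k) = (lam ^ 2) ^ k * lorentzQ m v := by
    intro k
    induction k with
    | zero => simp [hw0]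
    | succ n ih => rw [hwsucc, hQL, ih, pow_succ]; ring
  have hQxw : ∀ k, lorentzQ m (xw k) = (lam ^ 2) ^ k * lorentzQ m w₀ := by
    intro k
    induction k with
    | zero => simp [hxw0]
    | succ n ih => rw [hxwsucc, hQL, ih, pow_succ]; ring
  have hxwW : ∀ k, bform m u (xw k) = 0 ∧ bform m u' (xw k) = 0 := by
    intro k
    induction k with
    | zero => exact ⟨hbuw₀, hbu'w₀⟩
    | succ n ih =>
      constructor
      · rw [hxwsucc, hBuL, ih.1, mul_zero]
      · rw [hxwsucc, hBu'L, ih.2]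
  have hdecomp : ∀ k, w k = a • u + ((lam ^ 2) ^ k * b) • u' + xw k := by
    intro k
    induction k with
    | zero =>
      rw [hw0, hxw0, pow_zero, one_mul, hw₀def]
      module
    | succ n ih =>
      rw [hwsucc, ih, _root_.map_add, _root_.map_add, _root_.map_smul, _root_.map_smul, hu, hLu', hxwsucc, smul_smul]
      rw [show (lam ^ 2) ^ n * b * lam ^ 2 = (lam ^ 2) ^ (n + 1) * b by ring]
  -- bounds
  have hxwbd : ∀ k, ‖xw k‖ ≤ Real.sqrt (C * lorentzQ m w₀) := by
    intro k
    have h1 : ‖xw k‖ ^ 2 ≤ C * lorentzQ m (xw k) := hCle _ (hxwW k).1 (hxwW k).2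
    have hpk : (lam ^ 2) ^ k ≤ 1 := pow_le_one₀ (le_of_lt hlam2pos) (le_of_lt hlam2)
    have h2 : C * lorentzQ m (xw k) ≤ C * lorentzQ m w₀ := by
      rw [hQxw k]
      exact mul_le_mul_of_nonneg_left (mul_le_of_le_one_left hQw₀ hpk) hC0
    calc ‖xw k‖ = Real.sqrt (‖xw k‖ ^ 2) := (Real.sqrt_sq (norm_nonneg _)).symm
      _ ≤ Real.sqrt (C * lorentzQ m w₀) := Real.sqrt_le_sqrt (by linarith)
  set R : ℝ := |a| * ‖u‖ + |b| * ‖u'‖ + Real.sqrt (C * lorentzQ m w₀) with hRdef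
  have hwbd : ∀ k, ‖w k‖ ≤ R := by
    intro k
    rw [hdecomp k]
    refine le_trans (norm_add₃_le) ?_
    have h1 : ‖a • u‖ = |a| * ‖u‖ := by rw [norm_smul, Real.norm_eq_abs]
    have h2 : ‖((lam ^ 2) ^ k * b) • u'‖ ≤ |b| * ‖u'‖ := by
      rw [norm_smul, Real.norm_eq_abs, abs_mul]
      have hpk : |(lam ^ 2) ^ k| ≤ 1 := by
        rw [abs_of_nonneg (by positivity)]
        exact pow_le_one₀ (le_of_lt hlam2pos) (le_of_lt hlam2)
      calc |(lam ^ 2) ^ k| * |b| * ‖u'‖ ≤ 1 * |b| * ‖u'‖ :=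
            mul_le_mul_of_nonneg_right
              (mul_le_mul_of_nonneg_right hpk (abs_nonneg b)) (norm_nonneg u')
        _ = |b| * ‖u'‖ := by ring
    linarith [hxwbd k, h1, h2]
  -- the conjugates of τ
  set δ : ℕ → AffGroup (m + 2) := fun k => Nat.rec τ (fun _ g => γ * g * γ⁻¹) k with hδdef
  have hδ0 : δ 0 = τ := rfl
  have hδsucc : ∀ k, δ (k + 1) = γ * δ k * γ⁻¹ := fun k => rfl
  have hδΓ : ∀ k, δ k ∈ Γ := by
    intro k
    induction k with
    | zero => exact hτ
    | succ n ih =>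
      rw [hδsucc]
      exact Subgroup.mul_mem _ (Subgroup.mul_mem _ hγ ih) (Subgroup.inv_mem _ hγ)
  have hγadd : ∀ x z, γ (x + z) = γ x + γ.linear z := by
    intro x z
    rw [haff, haff x, _root_.map_add]
    abel
  have hδap : ∀ k x, δ k x = x + w k := by
    intro k
    induction k with
    | zero => intro x; rw [hδ0, hτv, hw0]
    | succ n ih =>
      intro x
      rw [hδsucc]
      have hmm : (γ * δ n * γ⁻¹) x = γ ((δ n) (γ⁻¹ x)) := by
        rw [AffineEquiv.coe_mul, AffineEquiv.coe_mul]
        rfl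
      have hγγ : γ (γ⁻¹ x) = x := by
        rw [AffineEquiv.inv_def]
        exact γ.apply_symm_apply x
      rw [hmm, ih, hγadd, hγγ, ← hwsucc]
  have hwinj : Function.Injective w := by
    intro j k hjk
    have hQ : (lam ^ 2) ^ j * lorentzQ m v = (lam ^ 2) ^ k * lorentzQ m v := by
      rw [← hQwk, ← hQwk, hjk]
    have hp : (lam ^ 2) ^ j = (lam ^ 2) ^ k := mul_right_cancel₀ hQv hQ
    have hsa : StrictAnti (fun n : ℕ => (lam ^ 2) ^ n) := fun a b h =>
      pow_lt_pow_right_of_lt_one₀ hlam2pos hlam2 h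
    exact hsa.injective hp
  exact trans_contra Γ hPD δ w hδΓ hδap hwinj R hwbd

end S5



/-- If `Γ ≤ Sim_L(ℝ^{m+2})` acts freely and properly discontinuously on `ℝ^{m+2}` and
contains a pure translation by a vector `v` with `Q(v) ≠ 0`, then every element of `Γ`
has similarity factor `λ = 1`. -/
theorem statement5 (m : ℕ) (Γ : Subgroup (AffGroup (m + 2)))
    (hSim : ∀ γ ∈ Γ, InSimL m γ)
    (hFree : FreeAction Γ) (hPD : ProperlyDisc Γ)
    (τ : AffGroup (m + 2)) (hτ : τ ∈ Γ) (v : Vec (m + 2))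
    (hτv : ∀ x : Vec (m + 2), τ x = x + v) (hQv : lorentzQ m v ≠ 0) :
    ∀ γ ∈ Γ, ∀ (lam : ℝ) (A : Vec (m + 2) →ₗ[ℝ] Vec (m + 2)), 0 < lam →
      (∀ v', lorentzQ m (A v') = lorentzQ m v') →
      (∀ v', γ.linear v' = lam • A v') → lam = 1 := by
  intro γ hγ lam A hlam hA hlin
  by_contra hne
  have hQL : ∀ x, lorentzQ m (γ.linear x) = lam ^ 2 * lorentzQ m x := by
    intro x
    rw [hlin x, S5.Q_smul, hA]
  rcases lt_or_gt_of_ne hne with hlt | hgt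
  · exact S5.core m Γ hFree hPD τ hτ v hτv hQv γ hγ lam hlam hlt hQL
  · have hlam' : 0 < lam⁻¹ := by positivity
    have hlt' : lam⁻¹ < 1 := by
      have h := inv_mul_cancel₀ (ne_of_gt hlam)
      nlinarith
    have hQLi : ∀ x, lorentzQ m ((γ⁻¹).linear x) = (lam⁻¹) ^ 2 * lorentzQ m x := by
      intro x
      have h1 : γ.linear ((γ⁻¹).linear x) = x := by
        rw [AffineEquiv.inv_def, AffineEquiv.linear_symm]
        exact γ.linear.apply_symm_apply x
      have h2 := hQL ((γ⁻¹).linear x)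
      rw [h1] at h2
      have hl2 : lam ^ 2 ≠ 0 := by positivity
      rw [inv_pow, h2, ← mul_assoc, inv_mul_cancel₀ hl2, one_mul]
    exact S5.core m Γ hFree hPD τ hτ v hτv hQv γ⁻¹ (Subgroup.inv_mem Γ hγ)
      lam⁻¹ hlam' hlt' hQLi
end
end

section
/- Let Γ ≤ Sim_L(ℝ^{m+2}) act freely and properly discontinuously on ℝ^{m+2}. Suppose γ ∈ Γ commutes with a nontrivial pure translation τ ∈ Γ (τ(x) = x + v, v ≠ 0). Then the similarity factor of γ equals 1. -/
noncomputable section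

/-! ### Auxiliary lemmas -/

/-- The Lorentz bilinear form. -/
def lB (m : ℕ) (x y : Vec (m + 2)) : ℝ :=
  (∑ i : Fin (m + 1), x i.castSucc * y i.castSucc) - x (Fin.last (m + 1)) * y (Fin.last (m + 1))

lemma lB_self (m : ℕ) (x : Vec (m+2)) : lB m x x = lorentzQ m x := by
  simp [lB, lorentzQ, sq]

lemma lorentzQ_add (m : ℕ) (x y : Vec (m+2)) :
    lorentzQ m (x + y) = lorentzQ m x + 2 * lB m x y + lorentzQ m y := by
  simp only [lorentzQ, lB, Pi.add_apply, add_sq, mul_assoc]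
  rw [Finset.sum_add_distrib, Finset.sum_add_distrib, ← Finset.mul_sum]
  ring

lemma lorentzQ_smul (m : ℕ) (t : ℝ) (x : Vec (m+2)) :
    lorentzQ m (t • x) = t^2 * lorentzQ m x := by
  simp only [lorentzQ, Pi.smul_apply, smul_eq_mul, mul_pow]
  rw [← Finset.mul_sum]; ring

lemma lB_add_left (m : ℕ) (x y z : Vec (m+2)) :
    lB m (x + y) z = lB m x z + lB m y z := by
  simp only [lB, Pi.add_apply, add_mul]
  rw [Finset.sum_add_distrib]; ring

lemma lB_smul_left (m : ℕ) (t : ℝ) (x z : Vec (m+2)) :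
    lB m (t • x) z = t * lB m x z := by
  simp only [lB, Pi.smul_apply, smul_eq_mul, mul_assoc]
  rw [← Finset.mul_sum]; ring

lemma lB_comm (m : ℕ) (x y : Vec (m+2)) : lB m x y = lB m y x := by
  simp only [lB]
  rw [Finset.sum_congr rfl (fun i _ => mul_comm (x i.castSucc) (y i.castSucc))]; ring

/-- Two isotropic vectors that are Lorentz-orthogonal are proportional. -/
lemma null_orth (m : ℕ) (x v : Vec (m+2)) (hv : v ≠ 0)
    (hQx : lorentzQ m x = 0) (hQv : lorentzQ m v = 0) (hB : lB m x v = 0) :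
    ∃ s : ℝ, x = s • v := by
  set vt := v (Fin.last (m+1)) with hvt
  set xt := x (Fin.last (m+1)) with hxt
  have hvt0 : vt ≠ 0 := by
    intro h
    apply hv
    have hsum : ∑ i : Fin (m+1), v i.castSucc ^ 2 = 0 := by
      have := hQv; simp only [lorentzQ, ← hvt, h] at this; linarith
    have hz : ∀ i : Fin (m+1), v i.castSucc = 0 := by
      intro i
      have := (Finset.sum_eq_zero_iff_of_nonneg
        (fun i _ => sq_nonneg (v i.castSucc))).mp hsum i (Finset.mem_univ i)
      exact pow_eq_zero_iff (n := 2) (by norm_num) |>.mp this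
    funext j
    refine Fin.lastCases ?_ ?_ j
    · exact h
    · exact hz
  have key : ∀ i : Fin (m+1), vt * x i.castSucc - xt * v i.castSucc = 0 := by
    have hx2 : ∑ i : Fin (m+1), x i.castSucc ^ 2 = xt ^ 2 := by
      have := hQx; simp only [lorentzQ, ← hxt] at this; linarith
    have hv2 : ∑ i : Fin (m+1), v i.castSucc ^ 2 = vt ^ 2 := by
      have := hQv; simp only [lorentzQ, ← hvt] at this; linarith
    have hxv : ∑ i : Fin (m+1), x i.castSucc * v i.castSucc = xt * vt := by
      have := hB; simp only [lB, ← hxt, ← hvt] at this; linarith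
    have hs : ∑ i : Fin (m+1), (vt * x i.castSucc - xt * v i.castSucc) ^ 2 = 0 := by
      have expand : ∀ i : Fin (m+1), (vt * x i.castSucc - xt * v i.castSucc) ^ 2
          = vt^2 * x i.castSucc ^2 - (2*vt*xt) * (x i.castSucc * v i.castSucc)
            + xt^2 * v i.castSucc ^2 := by
        intro i; ring
      rw [Finset.sum_congr rfl (fun i _ => expand i)]
      rw [Finset.sum_add_distrib, Finset.sum_sub_distrib, ← Finset.mul_sum, ← Finset.mul_sum,
        ← Finset.mul_sum]
      rw [hx2, hv2, hxv]; ring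
    intro i
    have := (Finset.sum_eq_zero_iff_of_nonneg (fun i _ => sq_nonneg _)).mp hs i (Finset.mem_univ i)
    exact pow_eq_zero_iff (n := 2) (by norm_num) |>.mp this
  refine ⟨xt / vt, ?_⟩
  funext j
  refine Fin.lastCases ?_ ?_ j
  · simp only [Pi.smul_apply, smul_eq_mul, ← hvt, ← hxt]
    field_simp
  · intro i
    simp only [Pi.smul_apply, smul_eq_mul]
    field_simp
    nlinarith [key i]

/-- If `Γ ≤ Sim_L(ℝ^{m+2})` acts freely and properly discontinuously on `ℝ^{m+2}` and
`γ ∈ Γ` commutes with a nontrivial pure translation `τ ∈ Γ`, then the similarity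
factor of `γ` equals `1`. -/
theorem statement6 (m : ℕ) (Γ : Subgroup (AffGroup (m + 2)))
    (hSim : ∀ γ ∈ Γ, InSimL m γ)
    (hFree : FreeAction Γ) (hPD : ProperlyDisc Γ)
    (γ τ : AffGroup (m + 2)) (hγ : γ ∈ Γ) (hτ : τ ∈ Γ) (v : Vec (m + 2)) (hv : v ≠ 0)
    (hτv : ∀ x : Vec (m + 2), τ x = x + v) (hcomm : γ * τ = τ * γ) :
    ∀ (lam : ℝ) (A : Vec (m + 2) →ₗ[ℝ] Vec (m + 2)), 0 < lam →
      (∀ v', lorentzQ m (A v') = lorentzQ m v') →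
      (∀ v', γ.linear v' = lam • A v') → lam = 1 := by
  intro lam A hlam hQA hlin
  by_contra hne
  -- basic facts about the affine structure
  have hmap : ∀ (x w : Vec (m+2)), γ (x + w) = γ x + γ.linear w := by
    intro x w
    have := γ.toAffineMap.map_vadd x w
    simpa [vadd_eq_add, add_comm] using this
  -- the linear part of γ fixes v
  have hLv : γ.linear v = v := by
    have h1 : γ (τ 0) = τ (γ 0) := by
      have : (γ * τ) 0 = (τ * γ) 0 := by rw [hcomm]
      exact this
    rw [hτv 0, hτv (γ 0)] at h1
    have h2 := hmap 0 v
    rw [h2] at h1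
    exact add_left_cancel h1
  have hQL : ∀ u, lorentzQ m (γ.linear u) = lam^2 * lorentzQ m u := by
    intro u; rw [hlin, lorentzQ_smul, hQA]
  have hlam2 : lam^2 ≠ 1 := by
    intro h
    have h2 : (lam - 1) * (lam + 1) = 0 := by nlinarith
    rcases mul_eq_zero.mp h2 with h3 | h3
    · exact hne (by linarith)
    · linarith
  -- v is isotropic
  have hQv : lorentzQ m v = 0 := by
    have h1 := hQL v
    rw [hLv] at h1
    by_contra h
    have h2 : (lam^2 - 1) * lorentzQ m v = 0 := by linarith
    rcases mul_eq_zero.mp h2 with h3 | h3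
    · exact hlam2 (by linarith)
    · exact h h3
  -- the linear part scales the bilinear form by lam^2
  have hBL : ∀ x y, lB m (γ.linear x) (γ.linear y) = lam^2 * lB m x y := by
    intro x y
    have hL_add : γ.linear (x + y) = γ.linear x + γ.linear y := map_add _ x y
    have e1 := lorentzQ_add m (γ.linear x) (γ.linear y)
    rw [← hL_add, hQL, hQL, hQL, lorentzQ_add m x y] at e1
    nlinarith [e1]
  -- injectivity of (L - 1) modulo ℝv
  have hker : ∀ x : Vec (m+2), (∃ c : ℝ, γ.linear x = x + c • v) → ∃ s : ℝ, x = s • v := by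
    intro x ⟨c, hLx⟩
    have hBxv : lB m x v = 0 := by
      have h1 := hBL x v
      rw [hLv, hLx, lB_add_left, lB_smul_left, lB_self, hQv] at h1
      -- h1 : lB x v + c * 0 = lam^2 * lB x v
      by_contra h
      have h2 : (lam^2 - 1) * lB m x v = 0 := by nlinarith [h1]
      rcases mul_eq_zero.mp h2 with h3 | h3
      · exact hlam2 (by linarith)
      · exact h h3
    have hQx : lorentzQ m x = 0 := by
      have h1 := hQL x
      rw [hLx, lorentzQ_add, lorentzQ_smul] at h1
      have hxc : lB m x (c • v) = 0 := by
        rw [lB_comm, lB_smul_left, lB_comm, hBxv, mul_zero]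
      rw [hxc, hQv] at h1
      -- h1 : Q x + 2*0 + c^2*0 = lam^2 * Q x
      by_contra h
      have h2 : (lam^2 - 1) * lorentzQ m x = 0 := by nlinarith [h1]
      rcases mul_eq_zero.mp h2 with h3 | h3
      · exact hlam2 (by linarith)
      · exact h h3
    exact null_orth m x v hv hQx hQv hBxv
  -- find a point x with γ x = x + c • v
  set W : Submodule ℝ (Vec (m+2)) := Submodule.span ℝ {v} with hW
  set D : Vec (m+2) →ₗ[ℝ] Vec (m+2) := γ.linear.toLinearMap - LinearMap.id with hDdef
  have hD : ∀ x, D x = γ.linear x - x := fun x => rfl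
  have hDv : D v = 0 := by rw [hD, hLv, sub_self]
  have hDW : W ≤ W.comap D := by
    intro y hy
    obtain ⟨s, hs⟩ := Submodule.mem_span_singleton.mp hy
    rw [Submodule.mem_comap, ← hs, map_smul, hDv, smul_zero]
    exact Submodule.zero_mem W
  have hinj : Function.Injective (W.mapQ W D hDW) := by
    rw [← LinearMap.ker_eq_bot, Submodule.eq_bot_iff]
    intro yb hyb
    obtain ⟨y, rfl⟩ := Submodule.Quotient.mk_surjective W yb
    rw [LinearMap.mem_ker, Submodule.mapQ_apply, Submodule.Quotient.mk_eq_zero] at hyb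
    obtain ⟨c, hc⟩ := Submodule.mem_span_singleton.mp hyb
    have : γ.linear y = y + c • v := by rw [hc, hD]; abel
    obtain ⟨s, hs⟩ := hker y ⟨c, this⟩
    rw [Submodule.Quotient.mk_eq_zero, hs]
    exact Submodule.mem_span_singleton.mpr ⟨s, rfl⟩
  have hsurj : Function.Surjective (W.mapQ W D hDW) :=
    (LinearMap.injective_iff_surjective).mp hinj
  obtain ⟨xb, hxb⟩ := hsurj (Submodule.Quotient.mk (-(γ 0)))
  obtain ⟨x, rfl⟩ := Submodule.Quotient.mk_surjective W xb
  rw [Submodule.mapQ_apply] at hxb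
  have hxW : D x + γ 0 ∈ W := by
    have := (Submodule.Quotient.eq W).mp hxb
    simpa [sub_neg_eq_add] using this
  obtain ⟨c, hc⟩ := Submodule.mem_span_singleton.mp hxW
  have hγx : γ x = x + c • v := by
    have h0 : γ x = γ 0 + γ.linear x := by
      have := hmap 0 x
      simpa using this
    rw [hD] at hc
    rw [h0, hc]
    abel
  -- iterates of γ at x
  have hLt : ∀ t : ℝ, γ.linear (t • v) = t • v := by
    intro t; rw [map_smul, hLv]
  have hpow : ∀ n : ℕ, (γ^n) x = x + ((n:ℝ) * c) • v := by
    intro n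
    induction n with
    | zero => simp
    | succ n ih =>
      have h1 : (γ^(n+1)) x = γ ((γ^n) x) := by rw [pow_succ' γ n]; rfl
      rw [h1, ih, hmap, hLt, hγx]
      push_cast
      module
  -- powers of τ are translations
  have hτinv : ∀ p, τ⁻¹ p = p - v := by
    intro p
    have h1 : τ (p - v) = p := by rw [hτv]; abel
    have h2 : τ⁻¹ (τ (p - v)) = p - v := by
      have : (τ⁻¹ * τ) (p - v) = p - v := by rw [inv_mul_cancel]; rfl
      exact this
    rw [h1] at h2
    exact h2
  have hτz : ∀ (k : ℤ) (p : Vec (m+2)), (τ^k) p = p + (k:ℝ) • v := by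
    intro k
    induction k using Int.induction_on with
    | zero => intro p; simp
    | succ n ih =>
      intro p
      have h1 : (τ^((n:ℤ)+1)) p = (τ^(n:ℤ)) (τ p) := by rw [zpow_add_one]; rfl
      rw [h1, hτv, ih]
      push_cast
      module
    | pred n ih =>
      intro p
      have h1 : (τ^(-(n:ℤ)-1)) p = (τ^(-(n:ℤ))) (τ⁻¹ p) := by rw [zpow_sub_one]; rfl
      rw [h1, hτinv, ih]
      push_cast
      module
  -- the family of group elements
  set j : ℕ → ℤ := fun n => -⌊(n:ℝ) * c⌋ with hj
  set g : ℕ → AffGroup (m+2) := fun n => τ^(j n) * γ^n with hg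
  have hgx : ∀ n : ℕ, g n x = x + ((n:ℝ) * c + (j n : ℝ)) • v := by
    intro n
    have h1 : g n x = (τ^(j n)) ((γ^n) x) := rfl
    rw [h1, hpow, hτz, add_assoc, ← add_smul]
  have hbound : ∀ n : ℕ, 0 ≤ (n:ℝ) * c + (j n : ℝ) ∧ (n:ℝ) * c + (j n : ℝ) < 1 := by
    intro n
    rw [hj]
    push_cast
    constructor
    · linarith [Int.floor_le ((n:ℝ) * c)]
    · linarith [Int.lt_floor_add_one ((n:ℝ) * c)]
  -- the compact set
  set K : Set (Vec (m+2)) := Metric.closedBall x ‖v‖ with hK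
  have hKc : IsCompact K := isCompact_closedBall x ‖v‖
  have hxK : x ∈ K := Metric.mem_closedBall_self (norm_nonneg v)
  have hgK : ∀ n : ℕ, g n x ∈ K := by
    intro n
    rw [hgx, hK, Metric.mem_closedBall, dist_eq_norm, add_sub_cancel_left, norm_smul]
    obtain ⟨h1, h2⟩ := hbound n
    calc ‖(n:ℝ) * c + (j n : ℝ)‖ * ‖v‖ ≤ 1 * ‖v‖ := by
          apply mul_le_mul_of_nonneg_right _ (norm_nonneg v)
          rw [Real.norm_eq_abs, abs_of_nonneg h1]
          linarith
      _ = ‖v‖ := one_mul _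
  have hmem : ∀ n : ℕ, g n ∈ {δ : AffGroup (m+2) | δ ∈ Γ ∧ (⇑δ '' K ∩ K).Nonempty} := by
    intro n
    refine ⟨mul_mem (zpow_mem hτ _) (pow_mem hγ _), ⟨g n x, ⟨x, hxK, rfl⟩, hgK n⟩⟩
  -- Q-scaling of differences
  have hQdiff : ∀ (k : ℕ) (p w : Vec (m+2)),
      lorentzQ m ((γ^k) (p + w) - (γ^k) p) = lam^(2*k) * lorentzQ m w := by
    intro k
    induction k with
    | zero => intro p w; simp
    | succ k ih =>
      intro p w
      have h1 : ∀ q : Vec (m+2), (γ^(k+1)) q = γ ((γ^k) q) := by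
        intro q; rw [pow_succ' γ k]; rfl
      have h2 : (γ^k) (p + w) = (γ^k) p + ((γ^k) (p + w) - (γ^k) p) := by abel
      rw [h1, h1, h2, hmap, add_sub_cancel_left, hQL, ih]
      ring
  -- injectivity of the family
  have hlaminj : ∀ a b : ℕ, lam ^ a = lam ^ b → a = b := by
    intro a b hab
    rcases lt_or_gt_of_ne hne with h | h
    · by_contra hne'
      rcases lt_or_gt_of_ne hne' with hl | hl
      · exact absurd hab (ne_of_gt (pow_lt_pow_right_of_lt_one₀ hlam h hl))
      · exact absurd hab (ne_of_lt (pow_lt_pow_right_of_lt_one₀ hlam h hl))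
    · by_contra hne'
      rcases lt_or_gt_of_ne hne' with hl | hl
      · exact absurd hab (ne_of_lt (pow_lt_pow_right₀ h hl))
      · exact absurd hab (ne_of_gt (pow_lt_pow_right₀ h hl))
  have hu : ∃ u : Vec (m+2), lorentzQ m u = -1 := by
    refine ⟨Pi.single (Fin.last (m+1)) 1, ?_⟩
    simp [lorentzQ, Pi.single_eq_of_ne (Fin.castSucc_lt_last _).ne]
  obtain ⟨u, hQu⟩ := hu
  have ginj : Function.Injective g := by
    intro a b hab
    have hpt : ∀ p : Vec (m+2), (γ^a) p + ((j a : ℝ)) • v = (γ^b) p + ((j b : ℝ)) • v := by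
      intro p
      have h1 : g a p = g b p := by rw [hab]
      have h2 : g a p = (γ^a) p + ((j a : ℝ)) • v := by
        have : g a p = (τ^(j a)) ((γ^a) p) := rfl
        rw [this, hτz]
      have h3 : g b p = (γ^b) p + ((j b : ℝ)) • v := by
        have : g b p = (τ^(j b)) ((γ^b) p) := rfl
        rw [this, hτz]
      rw [← h2, ← h3, h1]
    have hd : (γ^a) (0 + u) - (γ^a) 0 = (γ^b) (0 + u) - (γ^b) 0 := by
      have h1 := hpt (0 + u)
      have h2 := hpt 0
      have h1' : (γ^a) (0+u) = (γ^b) (0+u) + ((j b : ℝ)) • v - ((j a : ℝ)) • v := by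
        rw [← h1]; abel
      have h2' : (γ^a) 0 = (γ^b) 0 + ((j b : ℝ)) • v - ((j a : ℝ)) • v := by
        rw [← h2]; abel
      rw [h1', h2']; abel
    have hQa := hQdiff a 0 u
    have hQb := hQdiff b 0 u
    rw [hd] at hQa
    rw [hQb] at hQa
    rw [hQu] at hQa
    have : lam ^ (2*b) = lam ^ (2*a) := by linarith
    have := hlaminj _ _ this
    omega
  exact Set.infinite_of_injective_forall_mem ginj hmem (hPD K hKc)
end
end

section
/- Let Γ be a subgroup of the affine group Aff(ℝ^n) acting freely, properly discontinuously and cocompactly on ℝ^n. Let T = Γ ∩ ℝ^n be the subgroup of pure translations in Γ, assume T ≅ ℤ^k with k ≥ 1, let V ⊆ ℝ^n be the ℝ-linear span of the translation vectors of T, and assume V is invariant under the linear parts of all elements of Γ. Then each γ ∈ Γ induces an affine transformation of the quotient vector space ℝ^n/V ≅ ℝ^{n−k}, giving a homomorphism ρ : Q → Aff(ℝ^{n−k}) of the quotient group Q = Γ/T, and: (1) the induced action of Q on ℝ^{n−k} is properly discontinuous; (2) the kernel of ρ is a finite group; (3) the quotient ℝ^{n−k}/ρ(Q) is compact. -/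
noncomputable section
open Pointwise

lemma lattice_cocompact {n : ℕ} (V' : Submodule ℝ (Vec n)) (Λ : AddSubgroup (Vec n))
    (hspan : Submodule.span ℝ (Λ : Set (Vec n)) = V') :
    ∃ C : Set (Vec n), IsCompact C ∧ (0 : Vec n) ∈ C ∧
      ∀ x ∈ V', ∃ a ∈ Λ, x + a ∈ C := by
  obtain ⟨t, hts, hsp, hli⟩ := exists_linearIndependent ℝ (Λ : Set (Vec n))
  have htfin : t.Finite := hli.setFinite
  haveI : Finite t := htfin.to_subtype
  have htV : ∀ y ∈ t, y ∈ V' := fun y hy => by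
    rw [← hspan]; exact Submodule.subset_span (hts hy)
  set v : t → ↥V' := fun i => ⟨i.1, htV i.1 i.2⟩ with hv
  have hliv : LinearIndependent ℝ v := LinearIndependent.of_comp V'.subtype hli
  have himg : Subtype.val '' Set.range v = t := by
    ext a
    constructor
    · rintro ⟨-, ⟨i, rfl⟩, rfl⟩; exact i.2
    · intro ha; exact ⟨v ⟨a, ha⟩, ⟨⟨a, ha⟩, rfl⟩, rfl⟩
  have hmapsp : Submodule.map V'.subtype (Submodule.span ℝ (Set.range v)) = V' := by
    rw [Submodule.map_span]
    show Submodule.span ℝ (Subtype.val '' Set.range v) = V'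
    rw [himg, hsp, hspan]
  have hspv : ⊤ ≤ Submodule.span ℝ (Set.range v) := by
    have h2 : Submodule.map V'.subtype (⊤ : Submodule ℝ ↥V') = V' := by
      simp [Submodule.map_subtype_top]
    exact le_of_eq (Submodule.map_injective_of_injective V'.injective_subtype
      (h2.trans hmapsp.symm))
  let b : Module.Basis t ℝ ↥V' := Module.Basis.mk hliv hspv
  -- every ℤ-span element is in Λ
  have hZ : ∀ w ∈ Submodule.span ℤ (Set.range b), (w : Vec n) ∈ Λ := by
    intro w hw
    refine Submodule.span_induction ?_ ?_ ?_ ?_ hw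
    · rintro x ⟨i, rfl⟩
      rw [Module.Basis.mk_apply]
      exact hts i.2
    · exact Λ.zero_mem
    · intro x y _ _ hx hy
      exact Λ.add_mem hx hy
    · intro z x _ hx
      show ((z • x : ↥V') : Vec n) ∈ Λ
      rw [Submodule.coe_smul_of_tower]
      exact Λ.zsmul_mem hx z
  -- the fundamental domain
  have hbd := ZSpan.fundamentalDomain_isBounded b
  have hcpt : IsCompact (closure (ZSpan.fundamentalDomain b)) :=
    Metric.isCompact_of_isClosed_isBounded isClosed_closure hbd.closure
  refine ⟨Subtype.val '' closure (ZSpan.fundamentalDomain b),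
    hcpt.image continuous_subtype_val, ?_, ?_⟩
  · refine ⟨0, subset_closure ?_, rfl⟩
    intro i
    simp [ZSpan.fundamentalDomain]
  · intro x hx
    obtain ⟨w, hw, -⟩ := ZSpan.exist_unique_vadd_mem_fundamentalDomain b (⟨x, hx⟩ : ↥V')
    refine ⟨(w : ↥V'), hZ w w.2, ?_⟩
    refine ⟨(w : ↥V') + ⟨x, hx⟩, subset_closure ?_, ?_⟩
    · exact hw
    · simp [add_comm]


section Construct
variable {n : ℕ} {Γ : Subgroup (AffGroup n)} {V' : Submodule ℝ (Vec n)}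

lemma map_V'_eq (hInv : ∀ γ ∈ Γ, ∀ v ∈ V', γ.linear v ∈ V') (γ : ↥Γ) :
    V'.map ((γ : AffGroup n).linear : Vec n →ₗ[ℝ] Vec n) = V' := by
  apply le_antisymm
  · rintro - ⟨v, hv, rfl⟩
    exact hInv γ γ.2 v hv
  · intro v hv
    refine ⟨(γ : AffGroup n).linear.symm v, ?_, (γ : AffGroup n).linear.apply_symm_apply v⟩
    have h1 : ((γ⁻¹ : ↥Γ) : AffGroup n).linear v ∈ V' := hInv _ (γ⁻¹).2 v hv
    have h2 : ((γ⁻¹ : ↥Γ) : AffGroup n) = (γ : AffGroup n).symm := rfl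
    rwa [h2, AffineEquiv.linear_symm] at h1

/-- induced affine equivalence on the quotient -/
def quotAff (hInv : ∀ γ ∈ Γ, ∀ v ∈ V', γ.linear v ∈ V') (γ : ↥Γ) :
    (Vec n ⧸ V') ≃ᵃ[ℝ] (Vec n ⧸ V') :=
  ((Submodule.Quotient.equiv V' V' (γ : AffGroup n).linear (map_V'_eq hInv γ)).toAffineEquiv).trans
    (AffineEquiv.constVAdd ℝ (Vec n ⧸ V') (Submodule.Quotient.mk ((γ : AffGroup n) 0)))

lemma quotAff_mk (hInv : ∀ γ ∈ Γ, ∀ v ∈ V', γ.linear v ∈ V') (γ : ↥Γ) (x : Vec n) :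
    quotAff hInv γ (Submodule.Quotient.mk x) = Submodule.Quotient.mk ((γ : AffGroup n) x) := by
  have hdec : (γ : AffGroup n) x = (γ : AffGroup n).linear x + (γ : AffGroup n) 0 := by
    have := ((γ : AffGroup n) : Vec n ≃ᵃ[ℝ] Vec n).map_vadd 0 x
    simpa [vadd_eq_add] using this
  simp only [quotAff, AffineEquiv.trans_apply, LinearEquiv.coe_toAffineEquiv,
    AffineEquiv.constVAdd_apply, Submodule.Quotient.equiv_apply, hdec]
  rw [Submodule.mapQ_apply]
  change _ +ᵥ _ = _
  rw [vadd_eq_add, ← Submodule.Quotient.mk_add]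
  congr 1
  exact add_comm _ _

/-- the homomorphism `Γ → Aff(ℝ^n/V')` -/
def quotHom (hInv : ∀ γ ∈ Γ, ∀ v ∈ V', γ.linear v ∈ V') :
    ↥Γ →* ((Vec n ⧸ V') ≃ᵃ[ℝ] (Vec n ⧸ V')) :=
  MonoidHom.mk' (quotAff hInv) (by
    intro γ γ'
    ext z
    obtain ⟨x, rfl⟩ := Submodule.Quotient.mk_surjective V' z
    have h : ((γ * γ' : ↥Γ) : AffGroup n) x = (γ : AffGroup n) ((γ' : AffGroup n) x) := rfl
    rw [quotAff_mk, h]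
    show _ = quotAff hInv γ (quotAff hInv γ' (Submodule.Quotient.mk x))
    rw [quotAff_mk, quotAff_mk])

lemma quotHom_trivial (hInv : ∀ γ ∈ Γ, ∀ v ∈ V', γ.linear v ∈ V')
    {T : Subgroup ↥Γ}
    (hTV : ∀ γ ∈ T, ∃ a : Vec n, a ∈ V' ∧ ∀ x : Vec n, (γ : AffGroup n) x = x + a)
    (γ : ↥Γ) (hγ : γ ∈ T) : quotHom hInv γ = 1 := by
  obtain ⟨a, haV, ha⟩ := hTV γ hγ
  ext z
  obtain ⟨x, rfl⟩ := Submodule.Quotient.mk_surjective V' z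
  show quotAff hInv γ (Submodule.Quotient.mk x) = Submodule.Quotient.mk x
  rw [quotAff_mk, ha x]
  rw [show Submodule.Quotient.mk (p := V') (x + a) = Submodule.Quotient.mk x + Submodule.Quotient.mk a from rfl]
  simp [(Submodule.Quotient.mk_eq_zero V').2 haV]

/-- Let `Γ ≤ Aff(ℝ^n)` act freely, properly discontinuously and cocompactly on `ℝ^n`,
let `T = Γ ∩ ℝ^n` be its subgroup of pure translations, assumed isomorphic to `ℤ^k`
with `k ≥ 1`, let `V'` be the `ℝ`-span of the translation vectors of `T`, and assume
`V'` is invariant under the linear parts of all elements of `Γ`.  Then each `γ ∈ Γ`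
descends to an affine transformation of `ℝ^n/V' (≅ ℝ^{n-k})`, yielding a homomorphism
`ρ : Q = Γ/T → Aff(ℝ^{n-k})` such that (1) the induced `Q`-action on `ℝ^{n-k}` is
properly discontinuous, (2) `ker ρ` is finite, and (3) `ℝ^{n-k}/ρ(Q)` is compact. -/
theorem statement7 (n k : ℕ) (hk : 1 ≤ k) (Γ : Subgroup (AffGroup n))
    (hFree : FreeAction Γ) (hPD : ProperlyDisc Γ) (hCC : CocompactAction Γ)
    (T : Subgroup ↥Γ) [T.Normal]
    (hT : ∀ γ : ↥Γ, γ ∈ T ↔ ∃ a : Vec n, ∀ x : Vec n, (γ : AffGroup n) x = x + a)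
    (hTZk : Nonempty (↥T ≃* Multiplicative (Fin k → ℤ)))
    (V' : Submodule ℝ (Vec n))
    (hV : V' = Submodule.span ℝ
      {a : Vec n | ∃ γ : ↥Γ, γ ∈ T ∧ ∀ x : Vec n, (γ : AffGroup n) x = x + a})
    (hInv : ∀ γ ∈ Γ, ∀ v ∈ V', γ.linear v ∈ V') :
    ∃ ρ : (↥Γ ⧸ T) →* ((Vec n ⧸ V') ≃ᵃ[ℝ] (Vec n ⧸ V')),
      -- each `γ ∈ Γ` induces the affine transformation `ρ ⟦γ⟧` of `ℝ^n/V'`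
      (∀ γ : ↥Γ, ∀ x : Vec n,
        ρ (QuotientGroup.mk γ) (Submodule.Quotient.mk x) =
          Submodule.Quotient.mk ((γ : AffGroup n) x)) ∧
      -- (1) the induced action of `Q = Γ/T` on `ℝ^n/V'` is properly discontinuous
      (∀ K : Set (Vec n ⧸ V'), IsCompact K →
        {q : ↥Γ ⧸ T | (⇑(ρ q) '' K ∩ K).Nonempty}.Finite) ∧
      -- (2) the kernel of `ρ` is a finite group
      (ρ.ker : Set (↥Γ ⧸ T)).Finite ∧
      -- (3) the quotient `(ℝ^n/V')/ρ(Q)` is compact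
      (∃ K : Set (Vec n ⧸ V'), IsCompact K ∧
        ∀ z : Vec n ⧸ V', ∃ q : ↥Γ ⧸ T, ρ q z ∈ K) := by
  classical
  have hTV : ∀ γ ∈ T, ∃ a : Vec n, a ∈ V' ∧ ∀ x : Vec n, (γ : AffGroup n) x = x + a := by
    intro γ hγ
    obtain ⟨a, ha⟩ := (hT γ).1 hγ
    exact ⟨a, hV ▸ Submodule.subset_span ⟨γ, hγ, ha⟩, ha⟩
  set ρ : (↥Γ ⧸ T) →* ((Vec n ⧸ V') ≃ᵃ[ℝ] (Vec n ⧸ V')) :=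
    QuotientGroup.lift T (quotHom hInv)
      (fun γ hγ => quotHom_trivial hInv (fun δ hδ => hTV δ hδ) γ hγ) with hρdef
  have hρ : ∀ (γ : ↥Γ) (x : Vec n),
      ρ (QuotientGroup.mk γ) (Submodule.Quotient.mk x) =
        Submodule.Quotient.mk ((γ : AffGroup n) x) := by
    intro γ x
    show quotAff hInv γ (Submodule.Quotient.mk x) = _
    exact quotAff_mk hInv γ x
  -- the lattice of translations
  let Λ : AddSubgroup (Vec n) :=
    { carrier := {a : Vec n | ∃ γ : ↥Γ, γ ∈ T ∧ ∀ x : Vec n, (γ : AffGroup n) x = x + a}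
      zero_mem' := ⟨1, T.one_mem, fun x => by rw [add_zero]; rfl⟩
      add_mem' := by
        rintro a b ⟨γ, hγ, ha⟩ ⟨δ, hδ, hb⟩
        refine ⟨γ * δ, T.mul_mem hγ hδ, fun x => ?_⟩
        show (γ : AffGroup n) ((δ : AffGroup n) x) = x + (a + b)
        rw [hb x, ha (x + b)]
        abel
      neg_mem' := by
        rintro a ⟨γ, hγ, ha⟩
        refine ⟨γ⁻¹, T.inv_mem hγ, fun x => ?_⟩
        have h3 : (γ : AffGroup n) (x + -a) = x := by rw [ha (x + -a)]; abel
        calc ((γ⁻¹ : ↥Γ) : AffGroup n) x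
            = (γ : AffGroup n).symm ((γ : AffGroup n) (x + -a)) := by rw [h3]; rfl
          _ = x + -a := (γ : AffGroup n).symm_apply_apply _ }
  have hΛspan : Submodule.span ℝ (Λ : Set (Vec n)) = V' := by
    rw [hV]; rfl
  obtain ⟨C, hCcpt, hC0, hCtr⟩ := lattice_cocompact V' Λ hΛspan
  -- part (1)
  have part1 : ∀ K : Set (Vec n ⧸ V'), IsCompact K →
      {q : ↥Γ ⧸ T | (⇑(ρ q) '' K ∩ K).Nonempty}.Finite := by
    intro K hK
    have hcover : ∃ N : ℕ, K ⊆ Submodule.Quotient.mk '' Metric.ball (0 : Vec n) N := by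
      have hU : ∀ m : ℕ, IsOpen (Submodule.Quotient.mk (p := V') '' Metric.ball (0 : Vec n) m) :=
        fun m => Submodule.isOpenMap_mkQ V' _ Metric.isOpen_ball
      have hcov : K ⊆ ⋃ m : ℕ, Submodule.Quotient.mk (p := V') '' Metric.ball (0 : Vec n) m := by
        intro z hz
        obtain ⟨x, rfl⟩ := Submodule.Quotient.mk_surjective V' z
        obtain ⟨m, hm⟩ := exists_nat_gt ‖x‖
        refine Set.mem_iUnion.2 ⟨m, ⟨x, ?_, rfl⟩⟩
        simpa [Metric.mem_ball] using hm
      have hdir : Directed (· ⊆ ·)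
          fun m : ℕ => Submodule.Quotient.mk (p := V') '' Metric.ball (0 : Vec n) m := by
        intro i j
        refine ⟨max i j, Set.image_mono (Metric.ball_subset_ball ?_),
          Set.image_mono (Metric.ball_subset_ball ?_)⟩
        · exact_mod_cast le_max_left i j
        · exact_mod_cast le_max_right i j
      exact hK.elim_directed_cover _ hU hcov hdir
    obtain ⟨N, hN⟩ := hcover
    set K₁ : Set (Vec n) := Metric.closedBall 0 N with hK₁def
    have hK₁ : IsCompact K₁ := isCompact_closedBall 0 N
    have hball : Metric.ball (0 : Vec n) N ⊆ K₁ := Metric.ball_subset_closedBall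
    set K₂ : Set (Vec n) := K₁ + C with hK₂def
    have hK₂ : IsCompact K₂ := hK₁.add hCcpt
    have hK₁₂ : K₁ ⊆ K₂ := fun x hx => by simpa using Set.add_mem_add hx hC0
    have hF := hPD K₂ hK₂
    apply Set.Finite.subset
      (((hF.preimage (Subtype.coe_injective.injOn)).image (QuotientGroup.mk (s := T))))
    intro q hq
    obtain ⟨γ, rfl⟩ := QuotientGroup.mk_surjective q
    obtain ⟨y, ⟨z, hzK, rfl⟩, hyK⟩ := hq
    obtain ⟨x, hxball, rfl⟩ := hN hzK
    rw [hρ] at hyK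
    obtain ⟨y', hy'ball, hyeq⟩ := hN hyK
    have hw : (γ : AffGroup n) x - y' ∈ V' := by
      have := (Submodule.Quotient.eq V').1 hyeq
      simpa using V'.neg_mem this
    obtain ⟨a, haΛ, hwa⟩ := hCtr _ hw
    obtain ⟨τ, hτT, hτ⟩ := haΛ
    have h5 : ((τ * γ : ↥Γ) : AffGroup n) x = (γ : AffGroup n) x + a := by
      show (τ : AffGroup n) ((γ : AffGroup n) x) = _
      rw [hτ]
    have h6 : ((τ * γ : ↥Γ) : AffGroup n) x ∈ K₂ := by
      rw [h5, show (γ : AffGroup n) x + a = y' + ((γ : AffGroup n) x - y' + a) by abel]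
      exact Set.add_mem_add (hball hy'ball) hwa
    refine ⟨τ * γ, ⟨(τ * γ : ↥Γ).2, ⟨((τ * γ : ↥Γ) : AffGroup n) x,
      ⟨x, hK₁₂ (hball hxball), rfl⟩, h6⟩⟩, ?_⟩
    rw [QuotientGroup.eq]
    have := ‹T.Normal›.conj_mem τ⁻¹ (T.inv_mem hτT) γ⁻¹
    convert this using 1
    group
  refine ⟨ρ, hρ, part1, ?_, ?_⟩
  · -- part (2)
    apply (part1 {0} isCompact_singleton).subset
    intro q hq
    refine ⟨0, ⟨0, rfl, ?_⟩, rfl⟩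
    rw [MonoidHom.mem_ker.1 hq]
    rfl
  · -- part (3)
    obtain ⟨K0, hK0c, hK0⟩ := hCC
    refine ⟨Submodule.Quotient.mk '' K0, hK0c.image continuous_quot_mk, ?_⟩
    intro z
    obtain ⟨x, rfl⟩ := Submodule.Quotient.mk_surjective V' z
    obtain ⟨γ₀, hγ₀Γ, hγ₀⟩ := hK0 x
    refine ⟨QuotientGroup.mk (⟨γ₀, hγ₀Γ⟩ : ↥Γ), ?_⟩
    rw [hρ]
    exact Set.mem_image_of_mem _ hγ₀
end Construct
end
end
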